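/- Let 0 < α < 1, b > 0, J = [0,b]. Let ψ : J → ℝ be increasing and continuously differentiable with ψ'(z) > 0 for all z ∈ J. Let F : J × ℝ × ℝ → ℝ and H : J × J × ℝ → ℝ be continuous. Suppose ρ : J → ℝ is a continuous increasing function and γ > 0 are such that (Q3) (1/Γ(α)) ∫₀^z ψ'(κ)(ψ(z) − ψ(κ))^{α−1} ρ(κ) dκ ≤ γ ρ(z) for all z ∈ J. Let ε > 0 and let ω : J → ℝ be continuously differentiable such that for some continuous h : J → ℝ with |h(z)| ≤ ε ρ(z) for all z ∈ J one has N^{α,ψ}ω(z) = F(z, ω(z), (1/Γ(α)) ∫₀^z ψ'(τ)(ψ(z) − ψ(τ))^{α−1} H(z, τ, N^{α,ψ}ω(τ)) dτ) + h(z) for all z ∈ J. Then for all z ∈ J, |ω(z) − ω(0) − (1/Γ(α)) ∫₀^z ψ'(κ)(ψ(z) − ψ(κ))^{α−1} F(κ, ω(κ), (1/Γ(α)) ∫₀^κ ψ'(τ)(ψ(κ) − ψ(τ))^{α−1} H(κ, τ, N^{α,ψ}ω(τ)) dτ) dκ| ≤ ε γ ρ(z). -/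

import Mathlib

open MeasureTheory Set

/-- ψ-Riemann–Liouville fractional integral of order `α` of `f` with respect to `ψ`
(with `ψ'` a given derivative function of `ψ`):
`I^{α,ψ} f (z) = (1/Γ(α)) ∫₀^z ψ'(κ) (ψ(z) - ψ(κ))^(α-1) f(κ) dκ`. -/
noncomputable def psiInt (α : ℝ) (ψ ψ' f : ℝ → ℝ) (z : ℝ) : ℝ :=
  (1 / Real.Gamma α) * ∫ κ in (0:ℝ)..z, ψ' κ * (ψ z - ψ κ) ^ (α - 1) * f κ

/-- ψ-Caputo fractional derivative of order `α` (for `0 < α < 1`) of a function with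
derivative `v'`, with respect to `ψ` (with derivative `ψ'`):
`N^{α,ψ} v (z) = (1/Γ(1-α)) ∫₀^z ψ'(κ) (ψ(z) - ψ(κ))^(-α) (v'(κ)/ψ'(κ)) dκ`. -/
noncomputable def psiCaputo (α : ℝ) (ψ ψ' v' : ℝ → ℝ) (z : ℝ) : ℝ :=
  (1 / Real.Gamma (1 - α)) * ∫ κ in (0:ℝ)..z, ψ' κ * (ψ z - ψ κ) ^ (-α) * (v' κ / ψ' κ)

/-- Mittag-Leffler function `E_α(x) = ∑_{m=0}^∞ x^m / Γ(α m + 1)`. -/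
noncomputable def mittagLeffler (α x : ℝ) : ℝ :=
  ∑' m : ℕ, x ^ m / Real.Gamma (α * m + 1)

section AuxLemmas
open intervalIntegral

private lemma beta01 {α : ℝ} (hα0 : 0 < α) (hα1 : α < 1) :
    ∫ t in (0:ℝ)..1, t ^ (-α) * (1 - t) ^ (α - 1) = Real.Gamma (1 - α) * Real.Gamma α := by
  have h1 : (0:ℝ) < 1 - α := by linarith
  have key := Complex.Gamma_mul_Gamma_eq_betaIntegral (s := ((1 - α : ℝ) : ℂ))
      (t := ((α : ℝ) : ℂ)) (by simpa using h1) (by simpa using hα0)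
  have hsum : ((1 - α : ℝ) : ℂ) + ((α : ℝ) : ℂ) = 1 := by push_cast; ring
  rw [hsum, Complex.Gamma_one, one_mul] at key
  have hbeta : Complex.betaIntegral ((1 - α : ℝ) : ℂ) ((α : ℝ) : ℂ) =
      ((∫ t in (0:ℝ)..1, t ^ (-α) * (1 - t) ^ (α - 1) : ℝ) : ℂ) := by
    rw [Complex.betaIntegral, ← intervalIntegral.integral_ofReal]
    refine intervalIntegral.integral_congr fun x hx => ?_
    rw [uIcc_of_le (by norm_num : (0:ℝ) ≤ 1)] at hx
    obtain ⟨hx0, hx1⟩ := hx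
    push_cast
    have e1 : (1 - (α:ℂ) - 1) = ((-α : ℝ) : ℂ) := by push_cast; ring
    have e2 : ((α:ℂ) - 1) = ((α - 1 : ℝ) : ℂ) := by push_cast; ring
    have e3 : (1 - (x:ℂ)) = ((1 - x : ℝ) : ℂ) := by push_cast; ring
    rw [e1, e2, e3, ← Complex.ofReal_cpow hx0, ← Complex.ofReal_cpow (by linarith),
      ← Complex.ofReal_mul]
  rw [hbeta, Complex.Gamma_ofReal, Complex.Gamma_ofReal, ← Complex.ofReal_mul] at key
  exact_mod_cast key.symm

private lemma beta_cd {α : ℝ} (hα0 : 0 < α) (hα1 : α < 1) {c d : ℝ} (hcd : c < d) :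
    ∫ u in c..d, (d - u) ^ (α - 1) * (u - c) ^ (-α) = Real.Gamma α * Real.Gamma (1 - α) := by
  have hdc : (0:ℝ) < d - c := by linarith
  have key := intervalIntegral.integral_comp_mul_add
    (f := fun u => (d - u) ^ (α - 1) * (u - c) ^ (-α)) (a := 0) (b := 1) (ne_of_gt hdc) c
  simp only [mul_zero, zero_add, mul_one] at key
  have hd : d - c + c = d := by ring
  rw [hd] at key
  have congr1 : (∫ x in (0:ℝ)..1, (d - ((d-c) * x + c)) ^ (α - 1) * ((d-c) * x + c - c) ^ (-α))
      = ∫ x in (0:ℝ)..1, ((d-c) ^ (α-1) * (d-c) ^ (-α)) * (x ^ (-α) * (1 - x) ^ (α - 1)) := by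
    refine intervalIntegral.integral_congr fun x hx => ?_
    rw [uIcc_of_le (by norm_num : (0:ℝ) ≤ 1)] at hx
    obtain ⟨hx0, hx1⟩ := hx
    have e1 : d - ((d-c) * x + c) = (d - c) * (1 - x) := by ring
    have e2 : (d-c) * x + c - c = (d - c) * x := by ring
    rw [e1, e2, Real.mul_rpow hdc.le (by linarith), Real.mul_rpow hdc.le hx0]
    ring
  rw [congr1, intervalIntegral.integral_const_mul, beta01 hα0 hα1] at key
  have hconst : (d - c) ^ (α - 1) * (d - c) ^ (-α) = (d - c)⁻¹ := by
    rw [← Real.rpow_add hdc]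
    rw [show α - 1 + -α = (-1 : ℝ) by ring, Real.rpow_neg_one]
  rw [hconst, smul_eq_mul] at key
  have := mul_left_cancel₀ (inv_ne_zero (ne_of_gt hdc)) key
  rw [← this]
  ring

private lemma beta_integrableOn {α : ℝ} (hα0 : 0 < α) (hα1 : α < 1) {c d : ℝ} (hcd : c < d) :
    IntegrableOn (fun u => (d - u) ^ (α - 1) * (u - c) ^ (-α)) (Ioo c d) := by
  set m := (c + d) / 2 with hm
  have hcm : c < m := by simp [hm]; linarith
  have hmd : m < d := by simp [hm]; linarith
  have hmeas : Measurable fun u : ℝ => (d - u) ^ (α - 1) * (u - c) ^ (-α) := by fun_prop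
  have h1 : IntegrableOn (fun u => (d - u) ^ (α - 1) * (u - c) ^ (-α)) (Ioc c m) := by
    have hint : IntegrableOn (fun u => (d - m) ^ (α - 1) * (u - c) ^ (-α)) (Ioc c m) := by
      have := (intervalIntegral.intervalIntegrable_rpow' (a := 0) (b := m - c)
        (r := -α) (by linarith)).comp_sub_right c
      rw [zero_add, sub_add_cancel] at this
      exact ((intervalIntegrable_iff_integrableOn_Ioc_of_le hcm.le).mp this).const_mul _
    refine hint.mono' hmeas.aestronglyMeasurable ?_
    filter_upwards [ae_restrict_mem measurableSet_Ioc] with u hu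
    obtain ⟨hu1, hu2⟩ := hu
    have hdu : 0 < d - u := by linarith
    have huc : 0 < u - c := by linarith
    rw [Real.norm_eq_abs, abs_of_nonneg (by positivity)]
    exact mul_le_mul_of_nonneg_right
      (Real.rpow_le_rpow_of_nonpos (by linarith) (by linarith) (by linarith))
      (Real.rpow_nonneg huc.le _)
  have h2 : IntegrableOn (fun u => (d - u) ^ (α - 1) * (u - c) ^ (-α)) (Ioc m d) := by
    have hint : IntegrableOn (fun u => (d - u) ^ (α - 1) * (m - c) ^ (-α)) (Ioc m d) := by
      have := (intervalIntegral.intervalIntegrable_rpow' (a := 0) (b := d - m)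
        (r := α - 1) (by linarith)).comp_sub_left d
      rw [sub_zero, sub_sub_cancel] at this
      exact ((intervalIntegrable_iff_integrableOn_Ioc_of_le hmd.le).mp this.symm).mul_const _
    refine hint.mono' hmeas.aestronglyMeasurable ?_
    filter_upwards [ae_restrict_mem measurableSet_Ioc] with u hu
    obtain ⟨hu1, hu2⟩ := hu
    have hdu : 0 ≤ d - u := by linarith
    have huc : 0 < u - c := by linarith
    rw [Real.norm_eq_abs, abs_of_nonneg (by positivity)]
    exact mul_le_mul_of_nonneg_left
      (Real.rpow_le_rpow_of_nonpos (by linarith) (by linarith) (by linarith))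
      (Real.rpow_nonneg hdu _)
  exact (h1.union h2).mono_set (by
    intro x hx
    rcases le_or_gt x m with hxm | hxm
    · exact Or.inl ⟨hx.1, hxm⟩
    · exact Or.inr ⟨hxm, hx.2.le⟩)

private lemma kernel_beta {α b : ℝ} (hα0 : 0 < α) (hα1 : α < 1)
    {ψ ψ' : ℝ → ℝ}
    (hψ_mono : StrictMonoOn ψ (Icc 0 b))
    (hψ_deriv : ∀ x ∈ Icc 0 b, HasDerivWithinAt ψ (ψ' x) (Icc 0 b) x)
    (hψ'_pos : ∀ x ∈ Icc 0 b, 0 < ψ' x)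
    {τ z : ℝ} (hτ : 0 ≤ τ) (hτz : τ < z) (hzb : z ≤ b) :
    IntegrableOn (fun κ => ψ' κ * ((ψ z - ψ κ) ^ (α - 1) * (ψ κ - ψ τ) ^ (-α))) (Ioo τ z)
    ∧ ∫ κ in Ioo τ z, ψ' κ * ((ψ z - ψ κ) ^ (α - 1) * (ψ κ - ψ τ) ^ (-α)) =
      Real.Gamma α * Real.Gamma (1 - α) := by
  have hτmem : τ ∈ Icc 0 b := ⟨hτ, by linarith⟩
  have hzmem : z ∈ Icc 0 b := ⟨by linarith, hzb⟩
  have hsub : Ioo τ z ⊆ Icc 0 b := fun x hx => ⟨by linarith [hx.1], by linarith [hx.2]⟩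
  have hderiv' : ∀ κ ∈ Ioo τ z, HasDerivWithinAt ψ (ψ' κ) (Ioo τ z) κ :=
    fun κ hκ => (hψ_deriv κ (hsub hκ)).mono hsub
  have hinj : InjOn ψ (Ioo τ z) := hψ_mono.injOn.mono hsub
  have hcd : ψ τ < ψ z := hψ_mono hτmem hzmem hτz
  have himg : ψ '' Ioo τ z = Ioo (ψ τ) (ψ z) := by
    apply Subset.antisymm
    · rintro _ ⟨κ, hκ, rfl⟩
      exact ⟨hψ_mono hτmem (hsub hκ) hκ.1, hψ_mono (hsub hκ) hzmem hκ.2⟩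
    · have hcont : ContinuousOn ψ (Icc 0 b) :=
        fun x hx => (hψ_deriv x hx).continuousWithinAt
      exact intermediate_value_Ioo hτz.le (hcont.mono (Icc_subset_Icc hτ hzb))
  set g : ℝ → ℝ := fun u => (ψ z - u) ^ (α - 1) * (u - ψ τ) ^ (-α) with hg
  have heqon : EqOn (fun κ => |ψ' κ| • g (ψ κ))
      (fun κ => ψ' κ * ((ψ z - ψ κ) ^ (α - 1) * (ψ κ - ψ τ) ^ (-α))) (Ioo τ z) := by
    intro κ hκ
    simp only [hg, smul_eq_mul, abs_of_pos (hψ'_pos κ (hsub hκ))]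
  constructor
  · have hgi : IntegrableOn g (ψ '' Ioo τ z) := by
      rw [himg]; exact beta_integrableOn hα0 hα1 hcd
    exact ((integrableOn_image_iff_integrableOn_abs_deriv_smul measurableSet_Ioo
      hderiv' hinj g).mp hgi).congr_fun heqon measurableSet_Ioo
  · have key := integral_image_eq_integral_abs_deriv_smul measurableSet_Ioo hderiv' hinj g
    rw [himg] at key
    rw [← setIntegral_congr_fun measurableSet_Ioo heqon, ← key,
      ← integral_Ioc_eq_integral_Ioo, ← intervalIntegral.integral_of_le hcd.le]
    exact beta_cd hα0 hα1 hcd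

private lemma kernel_mul_integrable {α b : ℝ} (hα0 : 0 < α) (hα1 : α < 1)
    {ψ ψ' : ℝ → ℝ}
    (hψ_mono : StrictMonoOn ψ (Icc 0 b))
    (hψ_deriv : ∀ x ∈ Icc 0 b, HasDerivWithinAt ψ (ψ' x) (Icc 0 b) x)
    (hψ'_cont : ContinuousOn ψ' (Icc 0 b))
    (hψ'_pos : ∀ x ∈ Icc 0 b, 0 < ψ' x)
    {u : ℝ → ℝ} (hu : ContinuousOn u (Icc 0 b))
    {z : ℝ} (h0z : 0 < z) (hzb : z ≤ b) :
    IntegrableOn (fun κ => ψ' κ * (ψ z - ψ κ) ^ (α - 1) * u κ) (Ioo 0 z) := by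
  have h0mem : (0:ℝ) ∈ Icc 0 b := ⟨le_refl 0, by linarith⟩
  have hzmem : z ∈ Icc 0 b := ⟨h0z.le, hzb⟩
  have hsub : Ioo 0 z ⊆ Icc 0 b := fun x hx => ⟨hx.1.le, by linarith [hx.2]⟩
  have hψcont : ContinuousOn ψ (Icc 0 b) := fun x hx => (hψ_deriv x hx).continuousWithinAt
  have hψz : ψ 0 < ψ z := hψ_mono h0mem hzmem h0z
  have hderiv' : ∀ κ ∈ Ioo 0 z, HasDerivWithinAt ψ (ψ' κ) (Ioo 0 z) κ :=
    fun κ hκ => (hψ_deriv κ (hsub hκ)).mono hsub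
  have hinj : InjOn ψ (Ioo 0 z) := hψ_mono.injOn.mono hsub
  have himg : ψ '' Ioo 0 z = Ioo (ψ 0) (ψ z) := by
    apply Subset.antisymm
    · rintro _ ⟨κ, hκ, rfl⟩
      exact ⟨hψ_mono h0mem (hsub hκ) hκ.1, hψ_mono (hsub hκ) hzmem hκ.2⟩
    · exact intermediate_value_Ioo h0z.le (hψcont.mono (Icc_subset_Icc (le_refl 0) hzb))
  -- integrability of the kernel
  have hker : IntegrableOn (fun κ => |ψ' κ| • (ψ z - ψ κ) ^ (α - 1)) (Ioo 0 z) := by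
    refine (integrableOn_image_iff_integrableOn_abs_deriv_smul measurableSet_Ioo
      hderiv' hinj (fun x => (ψ z - x) ^ (α - 1))).mp ?_
    rw [himg]
    have := (intervalIntegral.intervalIntegrable_rpow' (a := 0) (b := ψ z - ψ 0)
      (r := α - 1) (by linarith)).comp_sub_left (ψ z)
    rw [sub_zero, sub_sub_cancel] at this
    exact ((intervalIntegrable_iff_integrableOn_Ioc_of_le hψz.le).mp this.symm).mono_set
      Ioo_subset_Ioc_self
  obtain ⟨C, hC⟩ := (isCompact_Icc (a := (0:ℝ)) (b := b)).exists_bound_of_continuousOn hu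
  have hC0 : 0 ≤ C := le_trans (norm_nonneg _) (hC 0 h0mem)
  refine (hker.mul_const C).mono' ?_ ?_
  · -- a.e. strong measurability
    apply ContinuousOn.aestronglyMeasurable _ measurableSet_Ioo
    refine (((hψ'_cont.mono hsub).mul ?_).mul (hu.mono hsub))
    refine (continuousOn_const.sub (hψcont.mono hsub)).rpow_const fun x hx => Or.inl ?_
    have : ψ x < ψ z := hψ_mono (hsub hx) hzmem hx.2
    exact sub_ne_zero.mpr (ne_of_gt this)
  · filter_upwards [ae_restrict_mem measurableSet_Ioo] with κ hκ
    have h1 : 0 < ψ' κ := hψ'_pos κ (hsub hκ)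
    have h2 : 0 ≤ (ψ z - ψ κ) ^ (α - 1) := Real.rpow_nonneg
      (by linarith [hψ_mono (hsub hκ) hzmem hκ.2]) _
    rw [smul_eq_mul, abs_of_pos h1]
    calc ‖ψ' κ * (ψ z - ψ κ) ^ (α - 1) * u κ‖
        = ψ' κ * (ψ z - ψ κ) ^ (α - 1) * ‖u κ‖ := by
          rw [norm_mul, norm_mul]
          rw [Real.norm_eq_abs (ψ' κ), Real.norm_eq_abs, abs_of_pos h1, abs_of_nonneg h2]
      _ ≤ ψ' κ * (ψ z - ψ κ) ^ (α - 1) * C :=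
          mul_le_mul_of_nonneg_left (hC κ (hsub hκ)) (by positivity)

private lemma fubini_core {α b : ℝ} (hα0 : 0 < α) (hα1 : α < 1)
    {ψ ψ' ω ω' : ℝ → ℝ}
    (hψ_mono : StrictMonoOn ψ (Icc 0 b))
    (hψ_deriv : ∀ x ∈ Icc 0 b, HasDerivWithinAt ψ (ψ' x) (Icc 0 b) x)
    (hψ'_cont : ContinuousOn ψ' (Icc 0 b))
    (hψ'_pos : ∀ x ∈ Icc 0 b, 0 < ψ' x)
    (hω_deriv : ∀ x ∈ Icc 0 b, HasDerivWithinAt ω (ω' x) (Icc 0 b) x)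
    (hω'_cont : ContinuousOn ω' (Icc 0 b))
    {z : ℝ} (h0z : 0 < z) (hzb : z ≤ b) :
    IntegrableOn (fun κ => ψ' κ * (ψ z - ψ κ) ^ (α - 1) * psiCaputo α ψ ψ' ω' κ) (Ioo 0 z)
    ∧ (1 / Real.Gamma α) *
        ∫ κ in Ioo 0 z, ψ' κ * (ψ z - ψ κ) ^ (α - 1) * psiCaputo α ψ ψ' ω' κ
      = ω z - ω 0 := by
  have hΓa : 0 < Real.Gamma α := Real.Gamma_pos_of_pos hα0
  have hΓ1 : 0 < Real.Gamma (1 - α) := Real.Gamma_pos_of_pos (by linarith)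
  set B := Real.Gamma α * Real.Gamma (1 - α) with hB
  have hsub : Ioo 0 z ⊆ Icc 0 b := fun x hx => ⟨hx.1.le, by linarith [hx.2]⟩
  have hsubz : Icc 0 z ⊆ Icc 0 b := Icc_subset_Icc (le_refl 0) hzb
  have hψcont : ContinuousOn ψ (Icc 0 b) := fun x hx => (hψ_deriv x hx).continuousWithinAt
  have hzmem : z ∈ Icc 0 b := ⟨h0z.le, hzb⟩
  -- Step A : simplification of psiCaputo
  have stepA : ∀ κ ∈ Icc 0 z, psiCaputo α ψ ψ' ω' κ =
      (1 / Real.Gamma (1 - α)) * ∫ τ in (0:ℝ)..κ, (ψ κ - ψ τ) ^ (-α) * ω' τ := by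
    intro κ hκ
    unfold psiCaputo
    congr 1
    refine intervalIntegral.integral_congr fun τ hτ => ?_
    rw [uIcc_of_le hκ.1] at hτ
    have hτb : τ ∈ Icc 0 b := ⟨hτ.1, le_trans hτ.2 (le_trans hκ.2 hzb)⟩
    have := hψ'_pos τ hτb
    field_simp
  set k : ℝ → ℝ → ℝ :=
    fun κ τ => ψ' κ * (ψ z - ψ κ) ^ (α - 1) * ((ψ κ - ψ τ) ^ (-α) * ω' τ) with hk
  set f : ℝ → ℝ → ℝ := fun κ τ => if τ < κ then k κ τ else 0 with hf
  set μ : Measure ℝ := volume.restrict (Ioo 0 z) with hμ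
  -- Claim 1
  have claim1 : ∀ κ ∈ Ioo 0 z, ∫ τ, f κ τ ∂μ =
      ψ' κ * (ψ z - ψ κ) ^ (α - 1) * ∫ τ in (0:ℝ)..κ, (ψ κ - ψ τ) ^ (-α) * ω' τ := by
    intro κ hκ
    have e1 : (fun τ => f κ τ) = (Iio κ).indicator (k κ) := by
      ext τ; simp [hf, Set.indicator_apply, Set.mem_Iio]
    rw [hμ, e1, setIntegral_indicator measurableSet_Iio]
    have e2 : Ioo 0 z ∩ Iio κ = Ioo 0 κ := by
      ext x
      simp only [mem_inter_iff, mem_Ioo, mem_Iio]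
      constructor
      · rintro ⟨⟨h1, _⟩, h3⟩; exact ⟨h1, h3⟩
      · rintro ⟨h1, h2⟩; exact ⟨⟨h1, lt_trans h2 hκ.2⟩, h2⟩
    rw [e2, ← integral_Ioc_eq_integral_Ioo,
      ← intervalIntegral.integral_of_le hκ.1.le, hk]
    simp only []
    rw [← intervalIntegral.integral_const_mul]
  -- Claim 2
  have claim2 : ∀ τ ∈ Ioo 0 z,
      Integrable (fun κ => f κ τ) μ ∧
      (∫ κ, f κ τ ∂μ) = B * ω' τ ∧
      (∫ κ, ‖f κ τ‖ ∂μ) = B * |ω' τ| := by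
    intro τ hτ
    obtain ⟨hkint, hkval⟩ := kernel_beta hα0 hα1 hψ_mono hψ_deriv hψ'_pos
      hτ.1.le hτ.2 hzb
    have e1 : (fun κ => f κ τ) = (Ioi τ).indicator (fun κ => k κ τ) := by
      ext κ; simp [hf, Set.indicator_apply, Set.mem_Ioi]
    have e2 : Ioo 0 z ∩ Ioi τ = Ioo τ z := by
      ext x
      simp only [mem_inter_iff, mem_Ioo, mem_Ioi]
      constructor
      · rintro ⟨⟨_, h2⟩, h3⟩; exact ⟨h3, h2⟩
      · rintro ⟨h1, h2⟩; exact ⟨⟨lt_trans hτ.1 h1, h2⟩, h1⟩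
    have e2' : Ioi τ ∩ Ioo 0 z = Ioo τ z := by rw [inter_comm, e2]
    have hrestrict : μ.restrict (Ioi τ) = volume.restrict (Ioo τ z) := by
      rw [hμ, Measure.restrict_restrict measurableSet_Ioi, e2']
    have hkernel_eq : EqOn (fun κ => (ψ' κ * ((ψ z - ψ κ) ^ (α - 1) * (ψ κ - ψ τ) ^ (-α))) * ω' τ)
        (fun κ => k κ τ) (Ioo τ z) := by
      intro κ hκ; simp only [hk]; ring
    have hint : IntegrableOn (fun κ => k κ τ) (Ioo τ z) :=
      IntegrableOn.congr_fun (hkint.mul_const (ω' τ)) hkernel_eq measurableSet_Ioo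
    have hval : ∫ κ in Ioo τ z, k κ τ = B * ω' τ := by
      rw [← setIntegral_congr_fun measurableSet_Ioo hkernel_eq, MeasureTheory.integral_mul_const, hkval, hB]
    refine ⟨?_, ?_, ?_⟩
    · rw [e1]
      rw [integrable_indicator_iff measurableSet_Ioi]
      rw [IntegrableOn, hrestrict]
      exact hint
    · rw [e1, MeasureTheory.integral_indicator measurableSet_Ioi, hrestrict]
      exact hval
    · have e3 : (fun κ => ‖f κ τ‖) = (Ioi τ).indicator (fun κ => ‖k κ τ‖) := by
        ext κ
        by_cases hc : τ < κ <;> simp [hf, Set.indicator_apply, Set.mem_Ioi, hc]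
      rw [e3, MeasureTheory.integral_indicator measurableSet_Ioi, hrestrict]
      have e4 : EqOn (fun κ => ‖k κ τ‖)
          (fun κ => (ψ' κ * ((ψ z - ψ κ) ^ (α - 1) * (ψ κ - ψ τ) ^ (-α))) * |ω' τ|)
          (Ioo τ z) := by
        intro κ hκ
        have hκb : κ ∈ Icc 0 b := ⟨by linarith [hκ.1, hτ.1], by linarith [hκ.2]⟩
        have h1 : 0 < ψ' κ := hψ'_pos κ hκb
        have h2 : 0 ≤ (ψ z - ψ κ) ^ (α - 1) := Real.rpow_nonneg
          (by linarith [hψ_mono hκb hzmem hκ.2]) _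
        have h3 : 0 ≤ (ψ κ - ψ τ) ^ (-α) := Real.rpow_nonneg
          (by linarith [hψ_mono ⟨hτ.1.le, by linarith [hτ.2]⟩ hκb hκ.1]) _
        simp only [hk, Real.norm_eq_abs]
        rw [abs_mul, abs_mul, abs_mul, abs_of_pos h1, abs_of_nonneg h2, abs_of_nonneg h3]
        ring
      rw [setIntegral_congr_fun measurableSet_Ioo e4, MeasureTheory.integral_mul_const, hkval]
  -- Claim 3 : product integrability
  have hμprod : μ.prod μ = (volume.prod volume).restrict ((Ioo 0 z) ×ˢ (Ioo 0 z)) := by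
    rw [hμ, Measure.prod_restrict]
  have claim3 : Integrable (Function.uncurry f) (μ.prod μ) := by
    have hU : MeasurableSet {p : ℝ × ℝ | p.2 < p.1} :=
      measurableSet_lt measurable_snd measurable_fst
    have hfind : Function.uncurry f = ({p : ℝ × ℝ | p.2 < p.1}).indicator
        (fun p => k p.1 p.2) := by
      ext p
      by_cases hc : p.2 < p.1 <;>
        simp [Function.uncurry, hf, hc, Set.indicator_apply, Set.mem_setOf_eq]
    have hmeas : AEStronglyMeasurable (Function.uncurry f) (μ.prod μ) := by
      rw [hfind, hμprod]
      apply AEMeasurable.aestronglyMeasurable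
      rw [aemeasurable_indicator_iff hU, Measure.restrict_restrict hU]
      set V := {p : ℝ × ℝ | p.2 < p.1} ∩ (Ioo 0 z ×ˢ Ioo 0 z) with hV
      have hVmeas : MeasurableSet V := hU.inter (measurableSet_Ioo.prod measurableSet_Ioo)
      have hmapsfst : MapsTo (Prod.fst : ℝ × ℝ → ℝ) V (Icc 0 b) :=
        fun p hp => hsub hp.2.1
      have hmapssnd : MapsTo (Prod.snd : ℝ × ℝ → ℝ) V (Icc 0 b) :=
        fun p hp => hsub hp.2.2
      have contψfst : ContinuousOn (fun p : ℝ × ℝ => ψ p.1) V :=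
        hψcont.comp continuousOn_fst hmapsfst
      have contψsnd : ContinuousOn (fun p : ℝ × ℝ => ψ p.2) V :=
        hψcont.comp continuousOn_snd hmapssnd
      have contψ'fst : ContinuousOn (fun p : ℝ × ℝ => ψ' p.1) V :=
        hψ'_cont.comp continuousOn_fst hmapsfst
      have contω'snd : ContinuousOn (fun p : ℝ × ℝ => ω' p.2) V :=
        hω'_cont.comp continuousOn_snd hmapssnd
      have term2 : ContinuousOn (fun p : ℝ × ℝ => (ψ z - ψ p.1) ^ (α - 1)) V := by
        refine (continuousOn_const.sub contψfst).rpow_const fun p hp => Or.inl ?_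
        have : ψ p.1 < ψ z := hψ_mono (hsub hp.2.1) hzmem hp.2.1.2
        exact sub_ne_zero.mpr (ne_of_gt this)
      have term3 : ContinuousOn (fun p : ℝ × ℝ => (ψ p.1 - ψ p.2) ^ (-α)) V := by
        refine (contψfst.sub contψsnd).rpow_const fun p hp => Or.inl ?_
        have : ψ p.2 < ψ p.1 := hψ_mono (hsub hp.2.2) (hsub hp.2.1) hp.1
        exact sub_ne_zero.mpr (ne_of_gt this)
      exact (((contψ'fst.mul term2).mul (term3.mul contω'snd)).aemeasurable hVmeas)
    refine (integrable_prod_iff' hmeas).mpr ⟨?_, ?_⟩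
    · filter_upwards [ae_restrict_mem measurableSet_Ioo] with τ hτ
      exact (claim2 τ hτ).1
    · have htarget : Integrable (fun τ => B * |ω' τ|) μ := by
        rw [hμ]
        exact ((((hω'_cont.mono hsubz).integrableOn_Icc).mono_set
          Ioo_subset_Icc_self).abs.const_mul B)
      refine htarget.congr ?_
      filter_upwards [ae_restrict_mem measurableSet_Ioo] with τ hτ
      exact ((claim2 τ hτ).2.2).symm
  -- swap
  have swap := MeasureTheory.integral_integral_swap claim3
  -- FTC
  have hωcont : ContinuousOn ω (Icc 0 b) := fun x hx => (hω_deriv x hx).continuousWithinAt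
  have hFTC : ∫ τ in Ioo 0 z, ω' τ = ω z - ω 0 := by
    rw [← integral_Ioc_eq_integral_Ioo, ← intervalIntegral.integral_of_le h0z.le]
    apply intervalIntegral.integral_eq_sub_of_hasDeriv_right_of_le h0z.le (hωcont.mono hsubz)
    · intro x hx
      exact ((hω_deriv x (hsub hx)).hasDerivAt
        (Icc_mem_nhds (by linarith [hx.1]) (by linarith [hx.2]))).hasDerivWithinAt
    · exact (hω'_cont.mono (by rw [uIcc_of_le h0z.le]; exact hsubz)).intervalIntegrable
  -- assembling
  have eOn : ∀ κ ∈ Ioo 0 z, (1 / Real.Gamma (1 - α)) * ∫ τ, f κ τ ∂μ =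
      ψ' κ * (ψ z - ψ κ) ^ (α - 1) * psiCaputo α ψ ψ' ω' κ := by
    intro κ hκ
    rw [claim1 κ hκ, stepA κ ⟨hκ.1.le, hκ.2.le⟩]
    ring
  have hswapval : ∫ κ, ∫ τ, f κ τ ∂μ ∂μ = B * (ω z - ω 0) := by
    rw [swap]
    have : ∫ τ, ∫ κ, f κ τ ∂μ ∂μ = ∫ τ, B * ω' τ ∂μ := by
      refine integral_congr_ae ?_
      filter_upwards [ae_restrict_mem measurableSet_Ioo] with τ hτ
      exact (claim2 τ hτ).2.1
    rw [this, MeasureTheory.integral_const_mul, hμ, hFTC]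
  constructor
  · have hint1 : Integrable (fun κ => ∫ τ, f κ τ ∂μ) μ := claim3.integral_prod_left
    exact IntegrableOn.congr_fun
      (μ := volume) (s := Ioo 0 z)
      (hint1.const_mul (1 / Real.Gamma (1 - α))) eOn measurableSet_Ioo
  · have : ∫ κ in Ioo 0 z, ψ' κ * (ψ z - ψ κ) ^ (α - 1) * psiCaputo α ψ ψ' ω' κ =
        ∫ κ, (1 / Real.Gamma (1 - α)) * ∫ τ, f κ τ ∂μ ∂μ := by
      rw [hμ]
      refine (setIntegral_congr_fun measurableSet_Ioo ?_).symm
      exact fun κ hκ => eOn κ hκ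
    rw [this, MeasureTheory.integral_const_mul, hswapval, hB]
    have h1 : Real.Gamma α ≠ 0 := ne_of_gt hΓa
    have h2 : Real.Gamma (1 - α) ≠ 0 := ne_of_gt hΓ1
    field_simp

end AuxLemmas

/-- Lemma 5.1: if `ω` solves the perturbed equation with perturbation `h` bounded by
`ε ρ(z)`, and `ρ` satisfies condition (Q3) `I^{α,ψ} ρ (z) ≤ γ ρ(z)`, then
`|ω(z) - ω(0) - I^{α,ψ} F(·, ω(·), I^{α,ψ} H(·,τ,N^{α,ψ}ω(τ)))(z)| ≤ ε γ ρ(z)`. -/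
theorem caputo_perturbed_integral_estimate (α b : ℝ) (hα0 : 0 < α) (hα1 : α < 1)
    (hb : 0 < b)
    (ψ ψ' : ℝ → ℝ)
    (hψ_mono : StrictMonoOn ψ (Set.Icc 0 b))
    (hψ_deriv : ∀ z ∈ Set.Icc 0 b, HasDerivWithinAt ψ (ψ' z) (Set.Icc 0 b) z)
    (hψ'_cont : ContinuousOn ψ' (Set.Icc 0 b))
    (hψ'_pos : ∀ z ∈ Set.Icc 0 b, 0 < ψ' z)
    (F : ℝ → ℝ → ℝ → ℝ) (H : ℝ → ℝ → ℝ → ℝ)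
    (hF_cont : ContinuousOn (fun p : ℝ × ℝ × ℝ => F p.1 p.2.1 p.2.2)
      (Set.Icc 0 b ×ˢ (Set.univ : Set ℝ) ×ˢ (Set.univ : Set ℝ)))
    (hH_cont : ContinuousOn (fun p : ℝ × ℝ × ℝ => H p.1 p.2.1 p.2.2)
      (Set.Icc 0 b ×ˢ Set.Icc 0 b ×ˢ (Set.univ : Set ℝ)))
    (ρ : ℝ → ℝ)
    (hρ_cont : ContinuousOn ρ (Set.Icc 0 b))
    (hρ_mono : StrictMonoOn ρ (Set.Icc 0 b))
    (γ : ℝ) (hγ : 0 < γ)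
    (hQ3 : ∀ z ∈ Set.Icc 0 b, psiInt α ψ ψ' ρ z ≤ γ * ρ z)
    (ε : ℝ) (hε : 0 < ε)
    (ω ω' : ℝ → ℝ)
    (hω_deriv : ∀ z ∈ Set.Icc 0 b, HasDerivWithinAt ω (ω' z) (Set.Icc 0 b) z)
    (hω'_cont : ContinuousOn ω' (Set.Icc 0 b))
    (h : ℝ → ℝ)
    (hh_cont : ContinuousOn h (Set.Icc 0 b))
    (hh_bound : ∀ z ∈ Set.Icc 0 b, |h z| ≤ ε * ρ z)
    (hω_eq : ∀ z ∈ Set.Icc 0 b,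
      psiCaputo α ψ ψ' ω' z =
        F z (ω z) (psiInt α ψ ψ' (fun τ => H z τ (psiCaputo α ψ ψ' ω' τ)) z) + h z) :
    ∀ z ∈ Set.Icc 0 b,
      |ω z - ω 0 - psiInt α ψ ψ'
          (fun κ => F κ (ω κ)
            (psiInt α ψ ψ' (fun τ => H κ τ (psiCaputo α ψ ψ' ω' τ)) κ)) z| ≤
        ε * γ * ρ z := by
  intro z hz
  rcases eq_or_lt_of_le hz.1 with h0z | h0z
  · -- z = 0
    rw [← h0z]
    have hρ0 : 0 ≤ ρ 0 := by
      have hq := hQ3 0 ⟨le_refl 0, hb.le⟩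
      rw [psiInt, intervalIntegral.integral_same, mul_zero] at hq
      nlinarith
    rw [psiInt, intervalIntegral.integral_same, mul_zero, sub_zero, sub_self, abs_zero]
    exact mul_nonneg (mul_nonneg hε.le hγ.le) hρ0
  · -- 0 < z
    have hzb : z ≤ b := hz.2
    have hΓa : 0 < Real.Gamma α := Real.Gamma_pos_of_pos hα0
    have hsubz : Set.Icc 0 z ⊆ Set.Icc 0 b := Set.Icc_subset_Icc (le_refl 0) hzb
    have hsub : Set.Ioo 0 z ⊆ Set.Icc 0 b := fun x hx => ⟨hx.1.le, by linarith [hx.2]⟩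
    have hzmem : z ∈ Set.Icc 0 b := ⟨h0z.le, hzb⟩
    obtain ⟨hcore_int, hcore_val⟩ := fubini_core hα0 hα1 hψ_mono hψ_deriv hψ'_cont hψ'_pos
      hω_deriv hω'_cont h0z hzb
    have hker_h : IntegrableOn (fun κ => ψ' κ * (ψ z - ψ κ) ^ (α - 1) * h κ) (Set.Ioo 0 z) :=
      kernel_mul_integrable hα0 hα1 hψ_mono hψ_deriv hψ'_cont hψ'_pos hh_cont h0z hzb
    have hker_ρ : IntegrableOn (fun κ => ψ' κ * (ψ z - ψ κ) ^ (α - 1) * (ε * ρ κ))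
        (Set.Ioo 0 z) :=
      kernel_mul_integrable hα0 hα1 hψ_mono hψ_deriv hψ'_cont hψ'_pos
        (continuousOn_const.mul hρ_cont) h0z hzb
    have hcongr : ∀ κ ∈ Set.Icc 0 z,
        F κ (ω κ) (psiInt α ψ ψ' (fun τ => H κ τ (psiCaputo α ψ ψ' ω' τ)) κ) =
          psiCaputo α ψ ψ' ω' κ - h κ := by
      intro κ hκ
      have := hω_eq κ (hsubz hκ)
      linarith
    have hsplit : psiInt α ψ ψ'
        (fun κ => F κ (ω κ)
          (psiInt α ψ ψ' (fun τ => H κ τ (psiCaputo α ψ ψ' ω' τ)) κ)) z =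
        (1 / Real.Gamma α) *
          ((∫ κ in Set.Ioo 0 z, ψ' κ * (ψ z - ψ κ) ^ (α - 1) * psiCaputo α ψ ψ' ω' κ) -
           (∫ κ in Set.Ioo 0 z, ψ' κ * (ψ z - ψ κ) ^ (α - 1) * h κ)) := by
      rw [psiInt]
      congr 1
      rw [intervalIntegral.integral_of_le h0z.le, MeasureTheory.integral_Ioc_eq_integral_Ioo]
      rw [setIntegral_congr_fun measurableSet_Ioo (g :=
        fun κ => ψ' κ * (ψ z - ψ κ) ^ (α - 1) * psiCaputo α ψ ψ' ω' κ -
          ψ' κ * (ψ z - ψ κ) ^ (α - 1) * h κ)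
        (fun κ hκ => by rw [hcongr κ ⟨hκ.1.le, hκ.2.le⟩]; ring)]
      exact MeasureTheory.integral_sub hcore_int hker_h
    have hEq : ω z - ω 0 - psiInt α ψ ψ'
        (fun κ => F κ (ω κ)
          (psiInt α ψ ψ' (fun τ => H κ τ (psiCaputo α ψ ψ' ω' τ)) κ)) z =
        (1 / Real.Gamma α) * ∫ κ in Set.Ioo 0 z, ψ' κ * (ψ z - ψ κ) ^ (α - 1) * h κ := by
      rw [hsplit, ← hcore_val]
      ring
    rw [hEq, abs_mul, abs_of_pos (by positivity : (0:ℝ) < 1 / Real.Gamma α)]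
    have hkern_nonneg : ∀ κ ∈ Set.Ioo 0 z, 0 ≤ ψ' κ * (ψ z - ψ κ) ^ (α - 1) := by
      intro κ hκ
      exact mul_nonneg (hψ'_pos κ (hsub hκ)).le (Real.rpow_nonneg
        (by linarith [hψ_mono (hsub hκ) hzmem hκ.2]) _)
    have habs : |∫ κ in Set.Ioo 0 z, ψ' κ * (ψ z - ψ κ) ^ (α - 1) * h κ| ≤
        ∫ κ in Set.Ioo 0 z, ψ' κ * (ψ z - ψ κ) ^ (α - 1) * (ε * ρ κ) := by
      calc |∫ κ in Set.Ioo 0 z, ψ' κ * (ψ z - ψ κ) ^ (α - 1) * h κ|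
          ≤ ∫ κ in Set.Ioo 0 z, |ψ' κ * (ψ z - ψ κ) ^ (α - 1) * h κ| := by
            simpa only [Real.norm_eq_abs] using
              MeasureTheory.norm_integral_le_integral_norm
                (μ := MeasureTheory.volume.restrict (Set.Ioo 0 z))
                (fun κ => ψ' κ * (ψ z - ψ κ) ^ (α - 1) * h κ)
        _ ≤ ∫ κ in Set.Ioo 0 z, ψ' κ * (ψ z - ψ κ) ^ (α - 1) * (ε * ρ κ) := by
            refine setIntegral_mono_on hker_h.abs hker_ρ measurableSet_Ioo ?_
            intro κ hκ
            rw [abs_mul]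
            rw [abs_of_nonneg (hkern_nonneg κ hκ)]
            exact mul_le_mul_of_nonneg_left (hh_bound κ (hsub hκ)) (hkern_nonneg κ hκ)
    have hQ : (1 / Real.Gamma α) *
        ∫ κ in Set.Ioo 0 z, ψ' κ * (ψ z - ψ κ) ^ (α - 1) * (ε * ρ κ) =
        ε * psiInt α ψ ψ' ρ z := by
      rw [psiInt, intervalIntegral.integral_of_le h0z.le,
        MeasureTheory.integral_Ioc_eq_integral_Ioo]
      rw [setIntegral_congr_fun measurableSet_Ioo (g :=
        fun κ => ε * (ψ' κ * (ψ z - ψ κ) ^ (α - 1) * ρ κ)) (fun κ hκ => by ring)]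
      rw [MeasureTheory.integral_const_mul]
      ring
    calc (1 / Real.Gamma α) * |∫ κ in Set.Ioo 0 z, ψ' κ * (ψ z - ψ κ) ^ (α - 1) * h κ|
        ≤ (1 / Real.Gamma α) *
          ∫ κ in Set.Ioo 0 z, ψ' κ * (ψ z - ψ κ) ^ (α - 1) * (ε * ρ κ) :=
          mul_le_mul_of_nonneg_left habs (by positivity)
      _ = ε * psiInt α ψ ψ' ρ z := hQ
      _ ≤ ε * (γ * ρ z) := mul_le_mul_of_nonneg_left (hQ3 z hz) hε.le
      _ = ε * γ * ρ z := by ring
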